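/- Let ψ be a nonnegative non-increasing measurable function on (0,∞), and let 0 < r < ∞, 0 < q < ∞. Then there is a constant c, depending only on r and q, such that (∫₀^∞ ( t^{−r} ∫₀^t ψ(s) ds )^q dt/t)^{1/q} ≤ c (∫₀^∞ ( t^{1−r} ψ(t) )^q dt/t)^{1/q}. -/

import Mathlib

open MeasureTheory ENNReal

lemma aux_tsum_rpow_le {q : ℝ} (hq0 : 0 < q) (hq1 : q ≤ 1) (f : ℕ → ℝ≥0∞) :
    (∑' k, f k) ^ q ≤ ∑' k, (f k) ^ q := by
  have htend : Filter.Tendsto (fun n => (∑ i ∈ Finset.range n, f i) ^ q)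
      Filter.atTop (nhds ((∑' k, f k) ^ q)) :=
    (ENNReal.continuous_rpow_const.tendsto _).comp (ENNReal.tendsto_nat_tsum f)
  refine le_of_tendsto htend (Filter.Eventually.of_forall fun n => ?_)
  calc (∑ i ∈ Finset.range n, f i) ^ q ≤ ∑ i ∈ Finset.range n, (f i) ^ q := by
        induction n with
        | zero => simp [ENNReal.zero_rpow_of_pos hq0]
        | succ n ih =>
          rw [Finset.sum_range_succ, Finset.sum_range_succ]
          exact le_trans (ENNReal.rpow_add_le_add_rpow _ _ hq0.le hq1)
            (add_le_add_left ih _)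
    _ ≤ ∑' k, (f k) ^ q := ENNReal.sum_le_tsum _

lemma aux_rpow_iSup {q : ℝ} (hq0 : 0 ≤ q) (f : ℕ → ℝ≥0∞) (hf : Monotone f) :
    (⨆ n, f n) ^ q = ⨆ n, (f n) ^ q := by
  have h1 : Filter.Tendsto f Filter.atTop (nhds (⨆ n, f n)) := tendsto_atTop_iSup hf
  have h2 : Filter.Tendsto (fun n => (f n) ^ q) Filter.atTop (nhds ((⨆ n, f n) ^ q)) :=
    (ENNReal.continuous_rpow_const.tendsto _).comp h1
  have h3 : Monotone fun n => (f n) ^ q := fun a b hab => ENNReal.rpow_le_rpow (hf hab) hq0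
  exact tendsto_nhds_unique h2 (tendsto_atTop_iSup h3)

lemma aux_minkowski_tsum {α : Type*} [MeasurableSpace α] (μ : Measure α)
    {q : ℝ} (hq : 1 ≤ q) (f : ℕ → α → ℝ≥0∞) (hf : ∀ k, Measurable (f k)) :
    (∫⁻ x, (∑' k, f k x) ^ q ∂μ) ^ (1/q) ≤ ∑' k, (∫⁻ x, (f k x) ^ q ∂μ) ^ (1/q) := by
  have hq0 : 0 < q := lt_of_lt_of_le one_pos hq
  set F : ℕ → α → ℝ≥0∞ := fun n x => ∑ i ∈ Finset.range n, f i x with hF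
  have hFmeas : ∀ n, Measurable (F n) := fun n => Finset.measurable_sum _ fun i _ => hf i
  have hFmono : ∀ x, Monotone fun n => F n x := fun x a b hab =>
    Finset.sum_le_sum_of_subset (Finset.range_subset_range.2 hab)
  -- finite Minkowski
  have hfin : ∀ n, (∫⁻ x, (F n x) ^ q ∂μ) ^ (1/q)
      ≤ ∑ i ∈ Finset.range n, (∫⁻ x, (f i x) ^ q ∂μ) ^ (1/q) := by
    intro n
    induction n with
    | zero => simp [hF, ENNReal.zero_rpow_of_pos hq0, ENNReal.zero_rpow_of_pos (by positivity : (0:ℝ) < 1/q), hq0]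
    | succ n ih =>
      have : (∫⁻ x, (F n x + f n x) ^ q ∂μ) ^ (1/q)
          ≤ (∫⁻ x, (F n x) ^ q ∂μ) ^ (1/q) + (∫⁻ x, (f n x) ^ q ∂μ) ^ (1/q) :=
        ENNReal.lintegral_Lp_add_le (hFmeas n).aemeasurable (hf n).aemeasurable hq
      simp only [hF, Finset.sum_range_succ] at this ⊢
      exact le_trans this (add_le_add_left ih _)
  have key : ∫⁻ x, (∑' k, f k x) ^ q ∂μ
      ≤ (∑' k, (∫⁻ x, (f k x) ^ q ∂μ) ^ (1/q)) ^ q := by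
    have hpt : ∀ x, (∑' k, f k x) ^ q = ⨆ n, (F n x) ^ q := by
      intro x
      rw [ENNReal.tsum_eq_iSup_sum' (fun n => Finset.range n) Finset.exists_nat_subset_range]
      exact aux_rpow_iSup hq0.le _ (hFmono x)
    simp_rw [hpt]
    rw [lintegral_iSup (fun n => (hFmeas n).pow_const q)
      (fun a b hab => fun x => ENNReal.rpow_le_rpow (hFmono x hab) hq0.le)]
    refine iSup_le fun n => ?_
    have h1 : (∫⁻ x, (F n x) ^ q ∂μ) ^ (1/q) ≤ ∑' k, (∫⁻ x, (f k x) ^ q ∂μ) ^ (1/q) :=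
      le_trans (hfin n) (ENNReal.sum_le_tsum _)
    calc ∫⁻ x, (F n x) ^ q ∂μ = ((∫⁻ x, (F n x) ^ q ∂μ) ^ (1/q)) ^ q := by
          rw [← ENNReal.rpow_mul, one_div, inv_mul_cancel₀ hq0.ne', ENNReal.rpow_one]
      _ ≤ _ := ENNReal.rpow_le_rpow h1 hq0.le
  calc (∫⁻ x, (∑' k, f k x) ^ q ∂μ) ^ (1/q)
      ≤ (((∑' k, (∫⁻ x, (f k x) ^ q ∂μ) ^ (1/q)) ^ q) ^ (1/q)) := ENNReal.rpow_le_rpow key (by positivity)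
    _ = _ := by rw [← ENNReal.rpow_mul, mul_one_div_cancel hq0.ne', ENNReal.rpow_one]

lemma aux_scale (g : ℝ → ℝ≥0∞) (hg : Measurable g) {c : ℝ} (hc : 0 < c) :
    ∫⁻ t in Set.Ioi (0:ℝ), g (c * t) = ENNReal.ofReal c⁻¹ * ∫⁻ t in Set.Ioi (0:ℝ), g t := by
  have hmap : Measure.map (fun x : ℝ => c * x) volume = ENNReal.ofReal |c⁻¹| • volume :=
    Real.map_volume_mul_left hc.ne'
  have hpre : (fun x : ℝ => c * x) ⁻¹' Set.Ioi 0 = Set.Ioi 0 := by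
    ext x; simp only [Set.mem_preimage, Set.mem_Ioi]
    constructor
    · intro h; nlinarith
    · intro h; positivity
  have := setLIntegral_map (μ := volume) (s := Set.Ioi (0:ℝ)) measurableSet_Ioi hg (measurable_const_mul c)
  rw [hpre] at this
  rw [← this, hmap, Measure.restrict_smul, lintegral_smul_measure, abs_of_pos (by positivity), smul_eq_mul]

lemma aux_union {t : ℝ} (ht : 0 < t) :
    Set.Ioc (0:ℝ) t = ⋃ k : ℕ, Set.Ioc ((2⁻¹:ℝ)^(k+1) * t) ((2⁻¹:ℝ)^k * t) := by
  ext x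
  simp only [Set.mem_Ioc, Set.mem_iUnion]
  constructor
  · rintro ⟨hx0, hxt⟩
    have hne : ∃ n : ℕ, (2⁻¹:ℝ)^(n+1) * t < x := by
      obtain ⟨n, hn⟩ := exists_pow_lt_of_lt_one (show (0:ℝ) < x / t by positivity)
        (show (2⁻¹:ℝ) < 1 by norm_num)
      exact ⟨n, by
        have h1 : (2⁻¹:ℝ)^(n+1) ≤ (2⁻¹:ℝ)^n := by
          apply pow_le_pow_of_le_one (by norm_num) (by norm_num) (Nat.le_succ n)
        have h2 : (2⁻¹:ℝ)^n * t < x := by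
          rw [lt_div_iff₀ ht] at hn
          exact hn
        nlinarith [pow_pos (show (0:ℝ) < 2⁻¹ by norm_num) n]⟩
    classical
    let k := Nat.find hne
    refine ⟨k, Nat.find_spec hne, ?_⟩
    cases hk : k with
    | zero => simpa using hxt
    | succ m =>
      have := Nat.find_min hne (by omega : m < k)
      simpa [hk] using not_lt.mp this
  · rintro ⟨k, h1, h2⟩
    have hp : (0:ℝ) < (2⁻¹:ℝ)^(k+1) * t := by positivity
    refine ⟨lt_trans hp h1, le_trans h2 ?_⟩
    have : (2⁻¹:ℝ)^k ≤ 1 := pow_le_one₀ (by norm_num) (by norm_num)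
    nlinarith

lemma aux_decomp (ψ : ℝ → ℝ≥0∞) (hψ : Measurable ψ)
    (hmono : ∀ s t, 0 < s → s ≤ t → ψ t ≤ ψ s) {t : ℝ} (ht : 0 < t) :
    ∫⁻ s in Set.Ioc 0 t, ψ s
      ≤ ∑' k : ℕ, ENNReal.ofReal ((2⁻¹:ℝ)^(k+1) * t) * ψ ((2⁻¹:ℝ)^(k+1) * t) := by
  set S : ℕ → Set ℝ := fun k => Set.Ioc ((2⁻¹:ℝ)^(k+1) * t) ((2⁻¹:ℝ)^k * t) with hS
  have hdisj : Pairwise (Function.onFun Disjoint S) := by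
    have key : ∀ i j : ℕ, i < j → Disjoint (S i) (S j) := by
      intro i j hij
      rw [hS, Set.Ioc_disjoint_Ioc]
      have h1 : (2⁻¹:ℝ)^j * t ≤ (2⁻¹:ℝ)^(i+1) * t := by
        have : (2⁻¹:ℝ)^j ≤ (2⁻¹:ℝ)^(i+1) :=
          pow_le_pow_of_le_one (by norm_num) (by norm_num) hij
        nlinarith
      exact le_trans (min_le_right _ _) (le_max_left _ _ |>.trans' h1)
    intro i j hij
    rcases lt_or_gt_of_ne hij with h | h
    · exact key i j h
    · exact (key j i h).symm
  have hmeas : ∀ k, MeasurableSet (S k) := fun k => measurableSet_Ioc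
  rw [aux_union ht, lintegral_iUnion hmeas hdisj]
  refine ENNReal.tsum_le_tsum fun k => ?_
  have ha : (0:ℝ) < (2⁻¹:ℝ)^(k+1) * t := by positivity
  have hbound : ∫⁻ s in S k, ψ s ≤ ∫⁻ _ in S k, ψ ((2⁻¹:ℝ)^(k+1) * t) := by
    refine setLIntegral_mono' (hmeas k) fun x hx => ?_
    exact hmono _ _ ha hx.1.le
  refine le_trans hbound ?_
  rw [setLIntegral_const, hS]
  rw [Real.volume_Ioc]
  have : (2⁻¹:ℝ)^k * t - (2⁻¹:ℝ)^(k+1) * t = (2⁻¹:ℝ)^(k+1) * t := by ring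
  rw [this, mul_comm]

lemma aux_term (ψ : ℝ → ℝ≥0∞) (hψ : Measurable ψ) (r : ℝ) {q : ℝ} (hq : 0 < q)
    {c : ℝ} (hc : 0 < c) :
    ∫⁻ t in Set.Ioi (0:ℝ),
        (ENNReal.ofReal (c * t ^ (1-r)) * ψ (c * t)) ^ q * ENNReal.ofReal t⁻¹
      = ENNReal.ofReal (c ^ (r*q)) *
        ∫⁻ u in Set.Ioi (0:ℝ),
          (ENNReal.ofReal (u ^ (1-r)) * ψ u) ^ q * ENNReal.ofReal u⁻¹ := by
  set g : ℝ → ℝ≥0∞ := fun u => (ENNReal.ofReal (u ^ (1-r)) * ψ u) ^ q * ENNReal.ofReal u⁻¹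
    with hg
  have hgmeas : Measurable g := by
    have h1 : Measurable fun u : ℝ => u ^ (1-r) := by fun_prop
    exact ((ENNReal.measurable_ofReal.comp h1).mul hψ).pow_const q |>.mul
      (ENNReal.measurable_ofReal.comp measurable_inv)
  have hpt : ∀ t ∈ Set.Ioi (0:ℝ),
      (ENNReal.ofReal (c * t ^ (1-r)) * ψ (c * t)) ^ q * ENNReal.ofReal t⁻¹
        = ENNReal.ofReal (c ^ (r*q)) * ENNReal.ofReal c * g (c * t) := by
    intro t ht
    rw [Set.mem_Ioi] at ht
    have hct : 0 < c * t := by positivity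
    have e1 : c * t ^ (1-r) = c ^ r * (c*t) ^ (1-r) := by
      rw [Real.mul_rpow hc.le ht.le, ← mul_assoc, ← Real.rpow_add hc]
      norm_num
    have e2 : t⁻¹ = c * (c*t)⁻¹ := by
      field_simp
    have e3 : ENNReal.ofReal (c ^ r) ^ q = ENNReal.ofReal (c ^ (r*q)) := by
      rw [ENNReal.ofReal_rpow_of_pos (Real.rpow_pos_of_pos hc r), ← Real.rpow_mul hc.le]
    rw [e1, ENNReal.ofReal_mul (Real.rpow_pos_of_pos hc r).le, mul_assoc,
      ENNReal.mul_rpow_of_nonneg _ _ hq.le, e3, e2,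
      ENNReal.ofReal_mul hc.le, hg]
    ring
  rw [setLIntegral_congr_fun measurableSet_Ioi hpt]
  rw [lintegral_const_mul' _ _ (by finiteness)]
  rw [aux_scale g hgmeas hc, ← mul_assoc, mul_assoc (ENNReal.ofReal (c ^ (r*q)))]
  rw [← ENNReal.ofReal_mul hc.le, mul_inv_cancel₀ hc.ne', ENNReal.ofReal_one, mul_one]

lemma aux_pow_rpow {x : ℝ} (hx : 0 ≤ x) (a : ℝ) (k : ℕ) : (x ^ k) ^ a = (x ^ a) ^ k := by
  rw [← Real.rpow_natCast x k, ← Real.rpow_mul hx, mul_comm, Real.rpow_mul hx, Real.rpow_natCast]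

lemma aux_pointwise (r : ℝ) (ψ : ℝ → ℝ≥0∞) (hψ : Measurable ψ)
    (hmono : ∀ s t, 0 < s → s ≤ t → ψ t ≤ ψ s) {t : ℝ} (ht : 0 < t) :
    ENNReal.ofReal (t ^ (-r)) * ∫⁻ s in Set.Ioc (0:ℝ) t, ψ s
      ≤ ∑' k : ℕ, ENNReal.ofReal ((2⁻¹:ℝ)^(k+1) * t ^ (1-r)) * ψ ((2⁻¹:ℝ)^(k+1) * t) := by
  refine le_trans (mul_le_mul_right (aux_decomp ψ hψ hmono ht) _) ?_
  rw [← ENNReal.tsum_mul_left]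
  refine ENNReal.tsum_le_tsum fun k => ?_
  rw [← mul_assoc, ← ENNReal.ofReal_mul (Real.rpow_nonneg ht.le _)]
  apply le_of_eq
  congr 2
  have h1 : (1 - r) = -r + 1 := by ring
  rw [h1, Real.rpow_add_one ht.ne']
  ring

lemma aux_J (ψ : ℝ → ℝ≥0∞) (hψ : Measurable ψ) (r : ℝ) {q : ℝ} (hq : 0 < q) (k : ℕ) :
    ∫⁻ t in Set.Ioi (0:ℝ),
        (ENNReal.ofReal ((2⁻¹:ℝ)^(k+1) * t ^ (1-r)) * ψ ((2⁻¹:ℝ)^(k+1) * t)) ^ q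
          * ENNReal.ofReal t⁻¹
      = ENNReal.ofReal ((2⁻¹:ℝ) ^ (r*q)) ^ (k+1) *
        ∫⁻ u in Set.Ioi (0:ℝ), (ENNReal.ofReal (u ^ (1-r)) * ψ u) ^ q * ENNReal.ofReal u⁻¹ := by
  rw [aux_term ψ hψ r hq (pow_pos (by norm_num : (0:ℝ) < 2⁻¹) (k+1))]
  congr 1
  rw [aux_pow_rpow (by norm_num : (0:ℝ) ≤ 2⁻¹) (r*q) (k+1),
    ENNReal.ofReal_pow (Real.rpow_nonneg (by norm_num) _)]

/-- Hardy's inequality for non-increasing functions, valid for all `0 < q < ∞`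
(including `0 < q < 1`): there is a constant `c = c(r,q)` such that
`(∫₀^∞ (t^{−r} ∫₀^t ψ)^q dt/t)^{1/q} ≤ c (∫₀^∞ (t^{1−r} ψ(t))^q dt/t)^{1/q}`. -/
theorem hardy_inequality_monotone (r q : ℝ) (hr : 0 < r) (hq : 0 < q) :
    ∃ c : ℝ, 0 < c ∧ ∀ ψ : ℝ → ENNReal, Measurable ψ →
      (∀ s t, 0 < s → s ≤ t → ψ t ≤ ψ s) →
      (∫⁻ t in Set.Ioi (0:ℝ),
          (ENNReal.ofReal (t ^ (-r)) * ∫⁻ s in Set.Ioc (0:ℝ) t, ψ s) ^ q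
            * ENNReal.ofReal t⁻¹) ^ (1 / q)
        ≤ ENNReal.ofReal c *
          (∫⁻ t in Set.Ioi (0:ℝ),
            (ENNReal.ofReal (t ^ (1 - r)) * ψ t) ^ q * ENNReal.ofReal t⁻¹) ^ (1 / q) := by
  rcases le_or_gt q 1 with hq1 | hq1
  · -- case q ≤ 1
    set θ : ℝ := (2⁻¹:ℝ) ^ (r*q) with hθ
    have hθ0 : 0 < θ := Real.rpow_pos_of_pos (by norm_num) _
    have hθ1 : θ < 1 := Real.rpow_lt_one (by norm_num) (by norm_num) (by positivity)
    set K : ℝ≥0∞ := ENNReal.ofReal θ * (1 - ENNReal.ofReal θ)⁻¹ with hK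
    have hKne : K ≠ ⊤ := by
      apply ENNReal.mul_ne_top ENNReal.ofReal_ne_top
      rw [ENNReal.inv_ne_top]
      intro h0
      rw [tsub_eq_zero_iff_le] at h0
      exact absurd (lt_of_le_of_lt h0 (by simpa using hθ1)) (lt_irrefl _)
    have hKq : K ^ (1/q) ≠ ⊤ := ENNReal.rpow_ne_top_of_nonneg (by positivity) hKne
    refine ⟨(K ^ (1/q)).toReal + 1, by positivity, fun ψ hψ hmono => ?_⟩
    set I := ∫⁻ u in Set.Ioi (0:ℝ),
      (ENNReal.ofReal (u ^ (1 - r)) * ψ u) ^ q * ENNReal.ofReal u⁻¹ with hI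
    have hb : ∀ k : ℕ, Measurable fun t : ℝ =>
        ENNReal.ofReal ((2⁻¹:ℝ)^(k+1) * t ^ (1-r)) * ψ ((2⁻¹:ℝ)^(k+1) * t) := by
      intro k
      have h1 : Measurable fun t : ℝ => (2⁻¹:ℝ)^(k+1) * t ^ (1-r) := by fun_prop
      exact (ENNReal.measurable_ofReal.comp h1).mul (hψ.comp (measurable_const_mul _))
    have hL : (∫⁻ t in Set.Ioi (0:ℝ),
        (ENNReal.ofReal (t ^ (-r)) * ∫⁻ s in Set.Ioc (0:ℝ) t, ψ s) ^ q
          * ENNReal.ofReal t⁻¹) ≤ K * I := by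
      calc ∫⁻ t in Set.Ioi (0:ℝ),
            (ENNReal.ofReal (t ^ (-r)) * ∫⁻ s in Set.Ioc (0:ℝ) t, ψ s) ^ q
              * ENNReal.ofReal t⁻¹
          ≤ ∫⁻ t in Set.Ioi (0:ℝ),
            (∑' k : ℕ, (ENNReal.ofReal ((2⁻¹:ℝ)^(k+1) * t ^ (1-r))
                * ψ ((2⁻¹:ℝ)^(k+1) * t)) ^ q) * ENNReal.ofReal t⁻¹ := by
            refine setLIntegral_mono' measurableSet_Ioi fun t ht => ?_
            refine mul_le_mul_left ?_ _
            refine le_trans (ENNReal.rpow_le_rpow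
              (aux_pointwise r ψ hψ hmono ht) hq.le) ?_
            exact aux_tsum_rpow_le hq hq1 _
        _ = ∑' k : ℕ, ∫⁻ t in Set.Ioi (0:ℝ),
              (ENNReal.ofReal ((2⁻¹:ℝ)^(k+1) * t ^ (1-r))
                * ψ ((2⁻¹:ℝ)^(k+1) * t)) ^ q * ENNReal.ofReal t⁻¹ := by
            simp_rw [← ENNReal.tsum_mul_right]
            exact lintegral_tsum fun k =>
              (((hb k).pow_const q).mul (by fun_prop)).aemeasurable
        _ = ∑' k : ℕ, ENNReal.ofReal θ ^ (k+1) * I := by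
            exact tsum_congr fun k => aux_J ψ hψ r hq k
        _ = K * I := by
            rw [ENNReal.tsum_mul_right, ENNReal.tsum_geometric_add_one, hK]
    calc (∫⁻ t in Set.Ioi (0:ℝ),
            (ENNReal.ofReal (t ^ (-r)) * ∫⁻ s in Set.Ioc (0:ℝ) t, ψ s) ^ q
              * ENNReal.ofReal t⁻¹) ^ (1/q)
        ≤ (K * I) ^ (1/q) := ENNReal.rpow_le_rpow hL (by positivity)
      _ = K ^ (1/q) * I ^ (1/q) := ENNReal.mul_rpow_of_nonneg _ _ (by positivity)
      _ ≤ ENNReal.ofReal ((K ^ (1/q)).toReal + 1) * I ^ (1/q) := by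
          refine mul_le_mul_left ?_ _
          conv_lhs => rw [← ENNReal.ofReal_toReal hKq]
          exact ENNReal.ofReal_le_ofReal (by linarith)
  · -- case q > 1
    set θ : ℝ := (2⁻¹:ℝ) ^ r with hθ
    have hθ0 : 0 < θ := Real.rpow_pos_of_pos (by norm_num) _
    have hθ1 : θ < 1 := Real.rpow_lt_one (by norm_num) (by norm_num) hr
    set T : ℝ≥0∞ := ENNReal.ofReal θ * (1 - ENNReal.ofReal θ)⁻¹ with hT
    have hTne : T ≠ ⊤ := by
      apply ENNReal.mul_ne_top ENNReal.ofReal_ne_top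
      rw [ENNReal.inv_ne_top]
      intro h0
      rw [tsub_eq_zero_iff_le] at h0
      exact absurd (lt_of_le_of_lt h0 (by simpa using hθ1)) (lt_irrefl _)
    refine ⟨T.toReal + 1, by positivity, fun ψ hψ hmono => ?_⟩
    set I := ∫⁻ u in Set.Ioi (0:ℝ),
      (ENNReal.ofReal (u ^ (1 - r)) * ψ u) ^ q * ENNReal.ofReal u⁻¹ with hI
    set b : ℕ → ℝ → ℝ≥0∞ := fun k t =>
      ENNReal.ofReal ((2⁻¹:ℝ)^(k+1) * t ^ (1-r)) * ψ ((2⁻¹:ℝ)^(k+1) * t) with hbdef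
    have hb : ∀ k : ℕ, Measurable (b k) := by
      intro k
      have h1 : Measurable fun t : ℝ => (2⁻¹:ℝ)^(k+1) * t ^ (1-r) := by fun_prop
      exact (ENNReal.measurable_ofReal.comp h1).mul (hψ.comp (measurable_const_mul _))
    set f : ℕ → ℝ → ℝ≥0∞ := fun k t => b k t * (ENNReal.ofReal t⁻¹) ^ (1/q) with hfdef
    have hf : ∀ k : ℕ, Measurable (f k) := fun k =>
      (hb k).mul ((ENNReal.measurable_ofReal.comp measurable_inv).pow_const _)
    have hwq : ∀ t : ℝ, ((ENNReal.ofReal t⁻¹) ^ (1/q)) ^ q = ENNReal.ofReal t⁻¹ := by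
      intro t
      rw [← ENNReal.rpow_mul, one_div, inv_mul_cancel₀ hq.ne', ENNReal.rpow_one]
    have hfq : ∀ k t, (f k t) ^ q = (b k t) ^ q * ENNReal.ofReal t⁻¹ := by
      intro k t
      rw [hfdef, ENNReal.mul_rpow_of_nonneg _ _ hq.le, hwq]
    have hsumf : ∀ t, (∑' k, f k t) ^ q
        = (∑' k, b k t) ^ q * ENNReal.ofReal t⁻¹ := by
      intro t
      rw [hfdef]
      rw [ENNReal.tsum_mul_right, ENNReal.mul_rpow_of_nonneg _ _ hq.le, hwq]
    -- Minkowski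
    have hmink : (∫⁻ t in Set.Ioi (0:ℝ), (∑' k, b k t) ^ q * ENNReal.ofReal t⁻¹) ^ (1/q)
        ≤ ∑' k : ℕ, (∫⁻ t in Set.Ioi (0:ℝ), (b k t) ^ q * ENNReal.ofReal t⁻¹) ^ (1/q) := by
      simp_rw [← hsumf, ← hfq]
      exact aux_minkowski_tsum _ hq1.le f hf
    have hterm : ∀ k : ℕ, (∫⁻ t in Set.Ioi (0:ℝ), (b k t) ^ q * ENNReal.ofReal t⁻¹) ^ (1/q)
        = ENNReal.ofReal θ ^ (k+1) * I ^ (1/q) := by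
      intro k
      rw [hbdef]
      rw [aux_J ψ hψ r hq k, ENNReal.mul_rpow_of_nonneg _ _ (by positivity : (0:ℝ) ≤ 1/q)]
      congr 1
      rw [← ENNReal.ofReal_pow (Real.rpow_nonneg (by norm_num) _),
        ENNReal.ofReal_rpow_of_pos (pow_pos (Real.rpow_pos_of_pos (by norm_num) _) _),
        aux_pow_rpow (Real.rpow_nonneg (by norm_num) _) (1/q) (k+1),
        ← Real.rpow_mul (by norm_num : (0:ℝ) ≤ 2⁻¹),
        mul_one_div, mul_div_cancel_right₀ r hq.ne', ← hθ,
        ENNReal.ofReal_pow hθ0.le]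
    calc (∫⁻ t in Set.Ioi (0:ℝ),
            (ENNReal.ofReal (t ^ (-r)) * ∫⁻ s in Set.Ioc (0:ℝ) t, ψ s) ^ q
              * ENNReal.ofReal t⁻¹) ^ (1/q)
        ≤ (∫⁻ t in Set.Ioi (0:ℝ), (∑' k, b k t) ^ q * ENNReal.ofReal t⁻¹) ^ (1/q) := by
          refine ENNReal.rpow_le_rpow ?_ (by positivity)
          refine setLIntegral_mono' measurableSet_Ioi fun t ht => ?_
          exact mul_le_mul_left
            (ENNReal.rpow_le_rpow (aux_pointwise r ψ hψ hmono ht) hq.le) _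
      _ ≤ ∑' k : ℕ, (∫⁻ t in Set.Ioi (0:ℝ), (b k t) ^ q * ENNReal.ofReal t⁻¹) ^ (1/q) := hmink
      _ = T * I ^ (1/q) := by
          simp_rw [hterm]
          rw [ENNReal.tsum_mul_right, ENNReal.tsum_geometric_add_one, hT]
      _ ≤ ENNReal.ofReal (T.toReal + 1) * I ^ (1/q) := by
          refine mul_le_mul_left ?_ _
          conv_lhs => rw [← ENNReal.ofReal_toReal hTne]
          exact ENNReal.ofReal_le_ofReal (by linarith [ENNReal.toReal_nonneg (a := T)])
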